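/- If n is even and there exists an Isbell family on an n-point set, then there exists a transitive avoidance game on a board of n points that is a Player I win. -/

import Mathlib

/-- A strategy: given the history of moves so far (in chronological order),
choose the next point to claim. -/
abbrev Strategy (X : Type*) := List X → X

/-- A strategy is valid if, whenever the history has no repeats and the board is
not yet full, it picks a previously unclaimed point. -/
def ValidStrategy {X : Type*} [Fintype X] (s : Strategy X) : Prop :=
  ∀ h : List X, h.Nodup → h.length < Fintype.card X → s h ∉ h

/-- The play (history of moves) after `k` moves, when Player I uses `sI`
(moving at even times) and Player II uses `sII` (moving at odd times). -/
def play {X : Type*} (sI sII : Strategy X) : ℕ → List X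
  | 0 => []
  | k + 1 =>
      let h := play sI sII k
      h ++ [if k % 2 = 0 then sI h else sII h]

/-- The set of points claimed by Player I in a history: the moves at even positions. -/
def claimedI {X : Type*} (h : List X) : Set X :=
  { x | ∃ i : ℕ, i % 2 = 0 ∧ h[i]? = some x }

/-- The set of points claimed by Player II in a history: the moves at odd positions. -/
def claimedII {X : Type*} (h : List X) : Set X :=
  { x | ∃ i : ℕ, i % 2 = 1 ∧ h[i]? = some x }

/-- A set of points contains a line of `ℒ`. -/
def ContainsLine {X : Type*} (ℒ : Set (Finset X)) (S : Set X) : Prop :=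
  ∃ L ∈ ℒ, ↑L ⊆ S

/-- The avoidance game with lines `ℒ` is a Player I win: Player I has a valid strategy
such that against every valid strategy of Player II there is a moment at which
Player II's claimed set contains a line while Player I's claimed set does not
(by monotonicity of the claimed sets, this says exactly that Player II's set comes
to contain a line strictly before Player I's set does). -/
def PIWin {X : Type*} [Fintype X] (ℒ : Set (Finset X)) : Prop :=
  ∃ sI : Strategy X, ValidStrategy sI ∧
    ∀ sII : Strategy X, ValidStrategy sII →
      ∃ k ≤ Fintype.card X,
        ContainsLine ℒ (claimedII (play sI sII k)) ∧
        ¬ ContainsLine ℒ (claimedI (play sI sII k))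

/-- A permutation of the board is an automorphism of the game if it maps the
family of lines onto itself. -/
def IsGameAuto {X : Type*} [DecidableEq X] (ℒ : Set (Finset X)) (g : Equiv.Perm X) : Prop :=
  ∀ L : Finset X, L ∈ ℒ ↔ L.image g ∈ ℒ

/-- The game is transitive if its automorphism group acts transitively on the board. -/
def TransitiveGame {X : Type*} [DecidableEq X] (ℒ : Set (Finset X)) : Prop :=
  ∀ x y : X, ∃ g : Equiv.Perm X, IsGameAuto ℒ g ∧ g x = y

/-- An Isbell family on a finite set `X`: an up-set containing exactly one of each
complementary pair of subsets, whose automorphism group acts transitively on `X`. -/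
def IsIsbell {X : Type*} [Fintype X] [DecidableEq X] (F : Set (Finset X)) : Prop :=
  (∀ A B : Finset X, A ∈ F → A ⊆ B → B ∈ F) ∧
  (∀ S : Finset X, Xor' (S ∈ F) (Sᶜ ∈ F)) ∧
  (∀ x y : X, ∃ g : Equiv.Perm X, (∀ A : Finset X, A ∈ F ↔ A.image g ∈ F) ∧ g x = y)


set_option linter.unusedSectionVars false
set_option maxHeartbeats 1000000

namespace IsbAux

section Lists
variable {α : Type*}

def altSplit : List α → List α × List α
  | [] => ([], [])
  | a :: l => (a :: (altSplit l).2, (altSplit l).1)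

lemma altSplit_perm (l : List α) : List.Perm ((altSplit l).1 ++ (altSplit l).2) l := by
  induction l with
  | nil => simp [altSplit]
  | cons a l ih =>
      simp only [altSplit, List.cons_append]
      exact List.Perm.cons a (List.perm_append_comm.trans ih)

lemma altSplit_append (l : List α) (x : α) :
    (l.length % 2 = 0 → altSplit (l ++ [x]) = ((altSplit l).1 ++ [x], (altSplit l).2)) ∧
    (l.length % 2 = 1 → altSplit (l ++ [x]) = ((altSplit l).1, (altSplit l).2 ++ [x])) := by
  induction l with
  | nil =>
      constructor
      · intro _; simp [altSplit]
      · intro h; simp at h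
  | cons a l ih =>
      have e : altSplit ((a :: l) ++ [x]) =
          (a :: (altSplit (l ++ [x])).2, (altSplit (l ++ [x])).1) := rfl
      constructor
      · intro h
        have h2 : l.length % 2 = 1 := by simp only [List.length_cons] at h; omega
        rw [e, ih.2 h2]
        rfl
      · intro h
        have h2 : l.length % 2 = 0 := by simp only [List.length_cons] at h; omega
        rw [e, ih.1 h2]
        rfl

lemma claimedI_cons (a : α) (l : List α) : claimedI (a :: l) = insert a (claimedII l) := by
  ext x
  simp only [claimedI, claimedII, Set.mem_setOf_eq, Set.mem_insert_iff]
  constructor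
  · rintro ⟨i, hi, hg⟩
    cases i with
    | zero =>
        left
        rw [List.getElem?_cons_zero] at hg
        exact (Option.some.inj hg).symm
    | succ j =>
        right
        exact ⟨j, by omega, by rwa [List.getElem?_cons_succ] at hg⟩
  · rintro (rfl | ⟨j, hj, hg⟩)
    · exact ⟨0, rfl, List.getElem?_cons_zero⟩
    · exact ⟨j + 1, by omega, by rwa [List.getElem?_cons_succ]⟩

lemma claimedII_cons (a : α) (l : List α) : claimedII (a :: l) = claimedI l := by
  ext x
  simp only [claimedI, claimedII, Set.mem_setOf_eq]
  constructor
  · rintro ⟨i, hi, hg⟩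
    cases i with
    | zero => simp at hi
    | succ j => exact ⟨j, by omega, by rwa [List.getElem?_cons_succ] at hg⟩
  · rintro ⟨j, hj, hg⟩
    exact ⟨j + 1, by omega, by rwa [List.getElem?_cons_succ]⟩

lemma claimed_split [DecidableEq α] (l : List α) :
    claimedI l = ↑(altSplit l).1.toFinset ∧ claimedII l = ↑(altSplit l).2.toFinset := by
  induction l with
  | nil =>
      constructor <;>
      · ext x
        simp [claimedI, claimedII, altSplit]
  | cons a l ih =>
      constructor
      · rw [claimedI_cons, ih.2]
        simp [altSplit]
      · rw [claimedII_cons, ih.1]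
        simp [altSplit]

lemma toFinset_append_singleton [DecidableEq α] (l : List α) (a : α) :
    (l ++ [a]).toFinset = insert a l.toFinset := by
  simp only [List.toFinset_append, List.toFinset_cons, List.toFinset_nil, insert_empty_eq]
  rw [Finset.union_comm]
  exact (Finset.insert_eq a l.toFinset).symm

end Lists

lemma play_length {X : Type*} (s t : Strategy X) : ∀ k, (play s t k).length = k := by
  intro k
  induction k with
  | zero => rfl
  | succ k ih => simp [play, ih]

variable {X : Type*} [Fintype X] [DecidableEq X]

variable {X : Type*} [Fintype X] [DecidableEq X]

def GoodAux (F : Set (Finset X)) : ℕ → Finset X → Finset X → Prop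
  | 0, C, _ => C ∉ F
  | (k+1), C, D => ∃ x, x ∉ C ∪ D ∧ ¬ GoodAux F k D (insert x C)

lemma goodAux_zero (F : Set (Finset X)) (C D : Finset X) :
    GoodAux F 0 C D ↔ C ∉ F := Iff.rfl

lemma goodAux_succ (F : Set (Finset X)) (k : ℕ) (C D : Finset X) :
    GoodAux F (k+1) C D ↔ ∃ x, x ∉ C ∪ D ∧ ¬ GoodAux F k D (insert x C) := Iff.rfl

lemma disj_insert_insert {C D : Finset X} {x p : X} (hdisj : Disjoint C D)
    (hx : x ∉ C ∪ D) (hp : p ∉ C ∪ D) (hxp : x ≠ p) :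
    Disjoint (insert x C) (insert p D) := by
  simp only [Finset.mem_union, not_or] at hx hp
  rw [Finset.disjoint_left]
  intro a ha hb
  simp only [Finset.mem_insert] at ha hb
  rcases ha with rfl | ha <;> rcases hb with rfl | hb
  · exact hxp rfl
  · exact hx.2 hb
  · exact hp.1 ha
  · exact Finset.disjoint_left.mp hdisj ha hb

lemma union_ins_ins {C D : Finset X} {x p : X} :
    insert x C ∪ insert p D = insert x (insert p (C ∪ D)) := by
  ext a; simp [Finset.mem_insert, Finset.mem_union]; tauto

lemma card_ins_ins {C D : Finset X} {x p : X}
    (hx : x ∉ C ∪ D) (hp : p ∉ C ∪ D) (hxp : x ≠ p) :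
    (insert x C ∪ insert p D).card = (C ∪ D).card + 2 := by
  have hx' : x ∉ insert p (C ∪ D) := by
    simp only [Finset.mem_insert, not_or]; exact ⟨hxp, hx⟩
  rw [union_ins_ins, Finset.card_insert_of_notMem hx', Finset.card_insert_of_notMem hp]

theorem keyLemma (F : Set (Finset X))
    (hxor : ∀ S : Finset X, Xor' (S ∈ F) (Sᶜ ∈ F))
    (heven : Even (Fintype.card X)) :
    ∀ u : ℕ,
      (∀ C D : Finset X, ∀ p : X, Disjoint C D → C.card = D.card → p ∉ C ∪ D →
          (C ∪ D)ᶜ.card = u → GoodAux F (u-1) C (insert p D) → GoodAux F u C D) ∧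
      (∀ C D : Finset X, Disjoint C D → C.card = D.card →
          (C ∪ D)ᶜ.card = u → ¬ GoodAux F u C D → GoodAux F u D C) := by
  intro u
  induction u using Nat.strong_induction_on with
  | _ u IH =>
  have hL2 : ∀ C D : Finset X, ∀ p : X, Disjoint C D → C.card = D.card → p ∉ C ∪ D →
      (C ∪ D)ᶜ.card = u → GoodAux F (u-1) C (insert p D) → GoodAux F u C D := by
    intro C D p hdisj hcard hp hu hG
    have hcu : (C ∪ D).card = C.card + D.card := Finset.card_union_of_disjoint hdisj
    have hle : (C ∪ D).card ≤ Fintype.card X := Finset.card_le_univ _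
    have hcompl : (C ∪ D)ᶜ.card = Fintype.card X - (C ∪ D).card := Finset.card_compl _
    obtain ⟨m, hm⟩ := heven
    have hu2 : 2 ≤ u := by
      have hp' : p ∈ (C ∪ D)ᶜ := Finset.mem_compl.mpr hp
      have h1 : 0 < (C ∪ D)ᶜ.card := Finset.card_pos.mpr ⟨p, hp'⟩
      omega
    obtain ⟨k, rfl⟩ : ∃ k, u = k + 2 := ⟨u - 2, by omega⟩
    have hG' : ∃ x, x ∉ C ∪ insert p D ∧ ¬ GoodAux F k (insert p D) (insert x C) := by
      have hh : k + 2 - 1 = k + 1 := by omega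
      rw [hh] at hG
      exact (goodAux_succ F k C (insert p D)).mp hG
    obtain ⟨x, hx, hGx⟩ := hG'
    have hxp : x ≠ p := by intro h; exact hx (by simp [h])
    have hxCD : x ∉ C ∪ D := by
      simp only [Finset.mem_union, Finset.mem_insert, not_or] at hx ⊢
      exact ⟨hx.1, hx.2.2⟩
    have hxC : x ∉ C := fun h => hxCD (Finset.mem_union_left _ h)
    have hxD : x ∉ D := fun h => hxCD (Finset.mem_union_right _ h)
    have hpC : p ∉ C := fun h => hp (Finset.mem_union_left _ h)
    have hpD : p ∉ D := fun h => hp (Finset.mem_union_right _ h)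
    rw [goodAux_succ]
    refine ⟨x, hxCD, ?_⟩
    rw [goodAux_succ]
    rintro ⟨y, hy, hGy⟩
    apply hGy
    have hyx : y ≠ x := by intro h; exact hy (by simp [h])
    have hyCD : y ∉ C ∪ D := by
      simp only [Finset.mem_union, Finset.mem_insert, not_or] at hy ⊢
      exact ⟨hy.2.2, hy.1⟩
    by_cases hyp : y = p
    · subst hyp
      -- L1 at level k
      have hdisj' : Disjoint (insert y D) (insert x C) :=
        disj_insert_insert hdisj.symm
          (by simp only [Finset.mem_union, not_or] at hyCD ⊢; exact ⟨hyCD.2, hyCD.1⟩)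
          (by simp only [Finset.mem_union, not_or] at hxCD ⊢; exact ⟨hxCD.2, hxCD.1⟩)
          hyx
      have hcard' : (insert y D).card = (insert x C).card := by
        rw [Finset.card_insert_of_notMem hpD, Finset.card_insert_of_notMem hxC, hcard]
      have hfuel : ((insert y D) ∪ (insert x C))ᶜ.card = k := by
        rw [Finset.union_comm, Finset.card_compl,
          card_ins_ins hxCD hyCD (Ne.symm hyx)]
        omega
      exact (IH k (by omega)).2 (insert y D) (insert x C) hdisj' hcard' hfuel hGx
    · -- y ≠ p
      rcases k with _ | j
      · exfalso
        have hsub : ({x, p, y} : Finset X) ⊆ (C ∪ D)ᶜ := by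
          intro a ha
          simp only [Finset.mem_insert, Finset.mem_singleton] at ha
          rcases ha with rfl | rfl | rfl
          · exact Finset.mem_compl.mpr hxCD
          · exact Finset.mem_compl.mpr hp
          · exact Finset.mem_compl.mpr hyCD
        have hc3 : ({x, p, y} : Finset X).card = 3 := by
          rw [Finset.card_insert_of_notMem (by
              simp only [Finset.mem_insert, Finset.mem_singleton, not_or]
              exact ⟨hxp, Ne.symm hyx⟩),
            Finset.card_insert_of_notMem (by
              simp only [Finset.mem_singleton]
              exact fun h => hyp h.symm),
            Finset.card_singleton]
        have := Finset.card_le_card hsub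
        omega
      · rw [goodAux_succ] at hGx
        push_neg at hGx
        have hyIn : y ∉ insert p D ∪ insert x C := by
          simp only [Finset.mem_union, Finset.mem_insert, not_or]
          simp only [Finset.mem_union, not_or] at hyCD
          exact ⟨⟨hyp, hyCD.2⟩, hyx, hyCD.1⟩
        have hGz := hGx y hyIn
        rw [Finset.insert_comm] at hGz
        have hdisj' : Disjoint (insert x C) (insert y D) :=
          disj_insert_insert hdisj hxCD hyCD (Ne.symm hyx)
        have hcard' : (insert x C).card = (insert y D).card := by
          rw [Finset.card_insert_of_notMem hxC, Finset.card_insert_of_notMem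
            (fun h => hyCD (Finset.mem_union_right _ h)), hcard]
        have hpIn : p ∉ insert x C ∪ insert y D := by
          simp only [Finset.mem_union, Finset.mem_insert, not_or]
          exact ⟨⟨Ne.symm hxp, hpC⟩, fun h => hyp h.symm, hpD⟩
        have hfuel : ((insert x C) ∪ (insert y D))ᶜ.card = j + 1 := by
          rw [Finset.card_compl, card_ins_ins hxCD hyCD (Ne.symm hyx)]
          omega
        exact (IH (j+1) (by omega)).1 (insert x C) (insert y D) p hdisj' hcard' hpIn hfuel hGz
  refine ⟨hL2, ?_⟩
  intro C D hdisj hcard hu hnG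
  rcases u with _ | k
  · have hempty : (C ∪ D)ᶜ = ∅ := Finset.card_eq_zero.mp hu
    have huniv : C ∪ D = Finset.univ := by
      rwa [Finset.compl_eq_empty_iff] at hempty
    have hC : C ∈ F := not_not.mp hnG
    have hDC : D = Cᶜ := by
      ext a
      rw [Finset.mem_compl]
      constructor
      · intro ha hc; exact Finset.disjoint_left.mp hdisj hc ha
      · intro ha
        have : a ∈ C ∪ D := huniv ▸ Finset.mem_univ a
        rcases Finset.mem_union.mp this with h | h
        · exact absurd h ha
        · exact h
    show D ∉ F
    rw [hDC]
    rcases hxor C with ⟨h1, h2⟩ | ⟨h1, h2⟩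
    · exact h2
    · exact absurd hC h2
  · rw [goodAux_succ]
    by_contra hno
    push_neg at hno
    have hpos : 0 < (C ∪ D)ᶜ.card := by omega
    obtain ⟨y, hy⟩ := Finset.card_pos.mp hpos
    have hyCD : y ∉ C ∪ D := Finset.mem_compl.mp hy
    have hGy := hno y (by rw [Finset.union_comm]; exact hyCD)
    exact hnG (hL2 C D y hdisj hcard hyCD hu hGy)

theorem mainGood (F : Set (Finset X))
    (hxor : ∀ S : Finset X, Xor' (S ∈ F) (Sᶜ ∈ F))
    (heven : Even (Fintype.card X)) :
    GoodAux F (Fintype.card X) (∅ : Finset X) (∅ : Finset X) := by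
  by_contra h
  have hfuel : ((∅ : Finset X) ∪ ∅)ᶜ.card = Fintype.card X := by simp
  exact h ((keyLemma F hxor heven (Fintype.card X)).2 ∅ ∅ (Finset.disjoint_empty_left _)
    rfl hfuel h)


open scoped Classical in
noncomputable def stratI [Nonempty X] (F : Set (Finset X)) : Strategy X := fun h =>
  if H : ∃ x : X, x ∉ h ∧
      ¬ GoodAux F (Fintype.card X - h.length - 1)
        (altSplit h).2.toFinset (insert x (altSplit h).1.toFinset)
  then H.choose
  else if H2 : ∃ x : X, x ∉ h then H2.choose else Classical.arbitrary X

lemma exists_not_mem (h : List X) (hnd : h.Nodup) (hlen : h.length < Fintype.card X) :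
    ∃ x : X, x ∉ h := by
  by_contra hc
  push_neg at hc
  have hsub : (Finset.univ : Finset X) ⊆ h.toFinset := fun x _ => List.mem_toFinset.mpr (hc x)
  have h2 := Finset.card_le_card hsub
  rw [List.toFinset_card_of_nodup hnd, Finset.card_univ] at h2
  omega

lemma valid_stratI [Nonempty X] (F : Set (Finset X)) : ValidStrategy (stratI F) := by
  intro h hnd hlen
  unfold stratI
  split
  · next H => exact H.choose_spec.1
  · split
    · next H2 => exact H2.choose_spec
    · next H2 => exact absurd (exists_not_mem h hnd hlen) H2

lemma invariant [Nonempty X] (F : Set (Finset X))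
    (hxor : ∀ S : Finset X, Xor' (S ∈ F) (Sᶜ ∈ F))
    (heven : Even (Fintype.card X))
    (sII : Strategy X) (hsII : ValidStrategy sII) :
    ∀ j : ℕ, 2*j ≤ Fintype.card X →
      (play (stratI F) sII (2*j)).Nodup ∧
      GoodAux F (Fintype.card X - 2*j)
        (altSplit (play (stratI F) sII (2*j))).1.toFinset
        (altSplit (play (stratI F) sII (2*j))).2.toFinset := by
  intro j
  induction j with
  | zero =>
      intro _
      refine ⟨by simp [play], ?_⟩
      simpa [play, altSplit] using mainGood F hxor heven
  | succ j ih =>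
      intro hle
      obtain ⟨hnd, hGood⟩ := ih (by omega)
      set h := play (stratI F) sII (2*j) with hh
      have hlen : h.length = 2*j := play_length _ _ _
      have hCD : (altSplit h).1.toFinset ∪ (altSplit h).2.toFinset = h.toFinset := by
        rw [← List.toFinset_append]
        exact List.toFinset_eq_of_perm _ _ (altSplit_perm h)
      have hfe : Fintype.card X - 2*j = (Fintype.card X - 2*j - 2) + 2 := by omega
      rw [hfe, goodAux_succ] at hGood
      obtain ⟨x, hx, hGx⟩ := hGood
      have Hcond : ∃ x : X, x ∉ h ∧
          ¬ GoodAux F (Fintype.card X - h.length - 1)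
            (altSplit h).2.toFinset (insert x (altSplit h).1.toFinset) := by
        refine ⟨x, ?_, ?_⟩
        · intro hmem
          exact hx (by rw [hCD]; exact List.mem_toFinset.mpr hmem)
        · have hf2 : Fintype.card X - h.length - 1 = (Fintype.card X - 2*j - 2) + 1 := by
            rw [hlen]; omega
          rw [hf2]
          exact hGx
      have hstep : stratI F h ∉ h ∧
          ¬ GoodAux F (Fintype.card X - h.length - 1)
            (altSplit h).2.toFinset (insert (stratI F h) (altSplit h).1.toFinset) := by
        have he : stratI F h = Hcond.choose := by
          unfold stratI
          rw [dif_pos Hcond]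
        rw [he]
        exact Hcond.choose_spec
      set a := stratI F h with hadef
      have hnda : (h ++ [a]).Nodup := by
        simp [List.nodup_append, hnd, hstep.1]
        intro c hc hca; exact hstep.1 (by rw [← hca]; exact hc)
      have hlena : (h ++ [a]).length = 2*j + 1 := by simp [hlen]
      have hb : sII (h ++ [a]) ∉ h ++ [a] := hsII (h ++ [a]) hnda (by rw [hlena]; omega)
      set b := sII (h ++ [a]) with hbdef
      have ep1 : play (stratI F) sII (2*j + 1) = h ++ [a] := by
        conv_lhs => rw [play]
        rw [← hh, if_pos (by omega : 2*j % 2 = 0)]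
      have ep2 : play (stratI F) sII (2*(j+1)) = (h ++ [a]) ++ [b] := by
        have e2 : 2*(j+1) = (2*j + 1) + 1 := by ring
        rw [e2]
        conv_lhs => rw [play]
        rw [ep1, if_neg (by omega : ¬ (2*j+1) % 2 = 0)]
      have hsplita : altSplit (h ++ [a]) = ((altSplit h).1 ++ [a], (altSplit h).2) :=
        (altSplit_append h a).1 (by rw [hlen]; omega)
      have hsplitb : altSplit ((h ++ [a]) ++ [b]) =
          ((altSplit h).1 ++ [a], (altSplit h).2 ++ [b]) := by
        rw [(altSplit_append (h ++ [a]) b).2 (by rw [hlena]; omega), hsplita]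
      have hbh : b ∉ h := fun hm => hb (List.mem_append_left _ hm)
      have hba : ¬ a = b := fun e => hb (List.mem_append_right _ (by simp [e]))
      constructor
      · rw [ep2]
        simp [List.nodup_append, hnd, hstep.1, hbh, hba]
        intro c hc
        exact ⟨fun e => hstep.1 (by rw [← e]; exact hc), fun e => hbh (by rw [← e]; exact hc)⟩
      · rw [ep2, hsplitb]
        simp only [toFinset_append_singleton]
        have hf3 : Fintype.card X - 2*(j+1) = Fintype.card X - 2*j - 2 := by omega
        rw [hf3]
        -- use hstep.2
        have hGx2 := hstep.2
        rw [show Fintype.card X - h.length - 1 = (Fintype.card X - 2*j - 2) + 1 from by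
          rw [hlen]; omega, goodAux_succ] at hGx2
        push_neg at hGx2
        apply hGx2 b
        intro hmem
        apply hb
        have : (altSplit h).2.toFinset ∪ insert a (altSplit h).1.toFinset
            = insert a (h.toFinset) := by
          rw [Finset.union_insert, Finset.union_comm, hCD]
        rw [this] at hmem
        rcases Finset.mem_insert.mp hmem with he | hmem'
        · exact List.mem_append_right _ (List.mem_singleton.mpr he)
        · exact List.mem_append_left _ (List.mem_toFinset.mp hmem')

end IsbAux

/-- If `n` is even and there exists an Isbell family on an `n`-point set, then there is
a transitive avoidance game on a board of `n` points that is a Player I win. -/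
theorem statement5 (n : ℕ) (hn : Even n)
    (hF : ∃ F : Set (Finset (Fin n)), IsIsbell F) :
    ∃ ℒ : Set (Finset (Fin n)), TransitiveGame ℒ ∧ PIWin ℒ := by

  obtain ⟨F, hup, hxor, htrans⟩ := hF
  rcases Nat.eq_zero_or_pos n with rfl | hpos
  · exfalso
    have h0 := hxor (∅ : Finset (Fin 0))
    have hc : (∅ : Finset (Fin 0))ᶜ = ∅ := by
      rw [Finset.compl_empty, Finset.univ_eq_empty]
    rw [hc] at h0
    rcases h0 with ⟨h1, h2⟩ | ⟨h1, h2⟩ <;> exact h2 h1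
  · haveI : Nonempty (Fin n) := ⟨⟨0, hpos⟩⟩
    have heven : Even (Fintype.card (Fin n)) := by rw [Fintype.card_fin]; exact hn
    obtain ⟨m, hm⟩ := hn
    refine ⟨F, htrans, IsbAux.stratI F, IsbAux.valid_stratI F, ?_⟩
    intro sII hsII
    obtain ⟨hnd, hGood⟩ := IsbAux.invariant F hxor heven sII hsII m
      (by rw [Fintype.card_fin]; omega)
    set h := play (IsbAux.stratI F) sII (2*m) with hh
    set C := (IsbAux.altSplit h).1.toFinset with hCdef
    set D := (IsbAux.altSplit h).2.toFinset with hDdef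
    have hlen : h.length = 2*m := IsbAux.play_length _ _ _
    have hfuel : Fintype.card (Fin n) - 2*m = 0 := by rw [Fintype.card_fin]; omega
    rw [hfuel] at hGood
    have hCF : C ∉ F := hGood
    have hCD : C ∪ D = h.toFinset := by
      rw [hCdef, hDdef, ← List.toFinset_append]
      exact List.toFinset_eq_of_perm _ _ (IsbAux.altSplit_perm h)
    have huniv : C ∪ D = Finset.univ := by
      rw [hCD]
      apply Finset.eq_univ_of_card
      rw [List.toFinset_card_of_nodup hnd, hlen, Fintype.card_fin]
      omega
    have hnd2 : ((IsbAux.altSplit h).1 ++ (IsbAux.altSplit h).2).Nodup :=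
      (List.Perm.nodup_iff (IsbAux.altSplit_perm h)).mpr hnd
    have hdisjL := (List.nodup_append.mp hnd2).2.2
    have hdisj : Disjoint C D := by
      rw [hCdef, hDdef, List.disjoint_toFinset_iff_disjoint]
      exact fun a ha hb => hdisjL a ha a hb rfl
    have hDc : D = Cᶜ := by
      ext u
      rw [Finset.mem_compl]
      constructor
      · intro hu hc; exact Finset.disjoint_left.mp hdisj hc hu
      · intro hu
        have : u ∈ C ∪ D := huniv ▸ Finset.mem_univ u
        rcases Finset.mem_union.mp this with hcc | hdd
        · exact absurd hcc hu
        · exact hdd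
    have hDF : D ∈ F := by
      rw [hDc]
      rcases hxor C with ⟨h1, h2⟩ | ⟨h1, h2⟩
      · exact absurd h1 hCF
      · exact h1
    refine ⟨2*m, by rw [Fintype.card_fin]; omega, ?_, ?_⟩
    · refine ⟨D, hDF, ?_⟩
      rw [(IsbAux.claimed_split h).2]
    · rintro ⟨L, hL, hsub⟩
      rw [(IsbAux.claimed_split h).1] at hsub
      exact hCF (hup L C hL (Finset.coe_subset.mp hsub))
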